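/- Let N be an odd positive integer and c = (c₁,c₂,c₃) ∈ ℝ³ with r = √(c₁²+c₂²+c₃²). Then the matrix ϖ(c) satisfies the polynomial identity (ϖ(c) − 2^{−N}(1+r)·I)·(ϖ(c) − 2^{−N}(1−r)·I) = 0. Consequently ϖ(c) is Hermitian, every eigenvalue of ϖ(c) equals 2^{−N}(1+r) or 2^{−N}(1−r), and if r > 0 then each of these two values occurs as an eigenvalue with multiplicity exactly 2^{N−1}. -/

import Mathlib

open Matrix BigOperators Polynomial

/-- The three Pauli matrices. -/
noncomputable def pauli : Fin 3 → Matrix (Fin 2) (Fin 2) ℂ :=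
  ![!![0, 1; 1, 0], !![0, -Complex.I; Complex.I, 0], !![1, 0; 0, -1]]

/-- The `N`-fold Kronecker power of a 2×2 matrix, with rows and columns indexed by
`Fin N → Fin 2` (the `N`-qubit computational basis). -/
noncomputable def kronPow (A : Matrix (Fin 2) (Fin 2) ℂ) (N : ℕ) :
    Matrix (Fin N → Fin 2) (Fin N → Fin 2) ℂ :=
  Matrix.of fun i j => ∏ k, A (i k) (j k)

/-- The `M³_N` state `ϖ(c) = 2^{-N} (I + c₁ σ₁^{⊗N} + c₂ σ₂^{⊗N} + c₃ σ₃^{⊗N})`. -/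
noncomputable def Mstate (N : ℕ) (c : Fin 3 → ℝ) :
    Matrix (Fin N → Fin 2) (Fin N → Fin 2) ℂ :=
  ((2 : ℂ) ^ N)⁻¹ • (1 + ∑ j : Fin 3, (c j : ℂ) • kronPow (pauli j) N)

lemma kronPow_mul (A B : Matrix (Fin 2) (Fin 2) ℂ) (N : ℕ) :
    kronPow A N * kronPow B N = kronPow (A * B) N := by
  ext i l
  simp only [kronPow, Matrix.mul_apply, Matrix.of_apply]
  rw [Finset.prod_univ_sum, Fintype.piFinset_univ]
  simp [Finset.prod_mul_distrib]

lemma kronPow_one (N : ℕ) : kronPow 1 N = 1 := by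
  ext i j
  simp only [kronPow, Matrix.of_apply, Matrix.one_apply]
  by_cases h : i = j
  · subst h; simp
  · rw [if_neg h]
    obtain ⟨k, hk⟩ := Function.ne_iff.mp h
    exact Finset.prod_eq_zero (Finset.mem_univ k) (by simp [Matrix.one_apply, hk])

lemma kronPow_smul (z : ℂ) (A : Matrix (Fin 2) (Fin 2) ℂ) (N : ℕ) :
    kronPow (z • A) N = z ^ N • kronPow A N := by
  ext i j
  simp [kronPow, Finset.prod_mul_distrib]

lemma pauli_sq (j : Fin 3) : pauli j * pauli j = 1 := by
  fin_cases j <;>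
    · ext i k; fin_cases i <;> fin_cases k <;>
        simp [pauli, Matrix.mul_apply, Fin.sum_univ_two, Complex.I_mul_I, Matrix.one_apply]
lemma pauli01 : pauli 0 * pauli 1 = Complex.I • pauli 2 := by
  ext i k; fin_cases i <;> fin_cases k <;> simp [pauli, Matrix.mul_apply, Fin.sum_univ_two]
lemma pauli10 : pauli 1 * pauli 0 = (-Complex.I) • pauli 2 := by
  ext i k; fin_cases i <;> fin_cases k <;> simp [pauli, Matrix.mul_apply, Fin.sum_univ_two]
lemma pauli12 : pauli 1 * pauli 2 = Complex.I • pauli 0 := by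
  ext i k; fin_cases i <;> fin_cases k <;> simp [pauli, Matrix.mul_apply, Fin.sum_univ_two]
lemma pauli21 : pauli 2 * pauli 1 = (-Complex.I) • pauli 0 := by
  ext i k; fin_cases i <;> fin_cases k <;> simp [pauli, Matrix.mul_apply, Fin.sum_univ_two]
lemma pauli20 : pauli 2 * pauli 0 = Complex.I • pauli 1 := by
  ext i k; fin_cases i <;> fin_cases k <;> simp [pauli, Matrix.mul_apply, Fin.sum_univ_two]
lemma pauli02 : pauli 0 * pauli 2 = (-Complex.I) • pauli 1 := by
  ext i k; fin_cases i <;> fin_cases k <;> simp [pauli, Matrix.mul_apply, Fin.sum_univ_two]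

lemma Ssq (N : ℕ) (hN : Odd N) (c : Fin 3 → ℝ) :
    (∑ j : Fin 3, (c j : ℂ) • kronPow (pauli j) N) *
      (∑ j : Fin 3, (c j : ℂ) • kronPow (pauli j) N) =
      ((c 0 : ℂ) ^ 2 + (c 1 : ℂ) ^ 2 + (c 2 : ℂ) ^ 2) • 1 := by
  set X' := kronPow (pauli 0) N with hX
  set Y' := kronPow (pauli 1) N with hY
  set Z' := kronPow (pauli 2) N with hZ
  set u := Complex.I ^ N with hu
  have hXX : X' * X' = 1 := by rw [hX, kronPow_mul, pauli_sq, kronPow_one]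
  have hYY : Y' * Y' = 1 := by rw [hY, kronPow_mul, pauli_sq, kronPow_one]
  have hZZ : Z' * Z' = 1 := by rw [hZ, kronPow_mul, pauli_sq, kronPow_one]
  have hXY : X' * Y' = u • Z' := by rw [hX, hY, kronPow_mul, pauli01, kronPow_smul]
  have hYX : Y' * X' = (-u) • Z' := by
    rw [hY, hX, kronPow_mul, pauli10, kronPow_smul, hN.neg_pow]
  have hYZ : Y' * Z' = u • X' := by rw [hY, hZ, kronPow_mul, pauli12, kronPow_smul]
  have hZY : Z' * Y' = (-u) • X' := by
    rw [hZ, hY, kronPow_mul, pauli21, kronPow_smul, hN.neg_pow]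
  have hZX : Z' * X' = u • Y' := by rw [hZ, hX, kronPow_mul, pauli20, kronPow_smul]
  have hXZ : X' * Z' = (-u) • Y' := by
    rw [hX, hZ, kronPow_mul, pauli02, kronPow_smul, hN.neg_pow]
  simp only [Fin.sum_univ_three, add_mul, mul_add, smul_mul_smul_comm,
    ← hX, ← hY, ← hZ, hXX, hYY, hZZ, hXY, hYX, hYZ, hZY, hZX, hXZ]
  match_scalars <;> ring

lemma kronPow_conjTranspose (A : Matrix (Fin 2) (Fin 2) ℂ) (N : ℕ) :
    (kronPow A N)ᴴ = kronPow Aᴴ N := by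
  ext i j
  simp [kronPow, Matrix.conjTranspose_apply]

lemma trace_kronPow (A : Matrix (Fin 2) (Fin 2) ℂ) (N : ℕ) :
    (kronPow A N).trace = A.trace ^ N := by
  simp only [Matrix.trace, Matrix.diag, kronPow, Matrix.of_apply]
  rw [show (∑ x, A x x) ^ N = ∏ _k : Fin N, ∑ x : Fin 2, A x x by simp [Finset.prod_const],
    Finset.prod_univ_sum, Fintype.piFinset_univ]

lemma pauli_hermitian (j : Fin 3) : (pauli j)ᴴ = pauli j := by
  fin_cases j <;>
    · ext i k; fin_cases i <;> fin_cases k <;>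
        simp [pauli, Matrix.conjTranspose_apply]

lemma pauli_trace (j : Fin 3) : (pauli j).trace = 0 := by
  fin_cases j <;> simp [pauli, Matrix.trace, Fin.sum_univ_two]

lemma aux_root_iff_spectrum {n : Type*} [Fintype n] [DecidableEq n]
    (M : Matrix n n ℂ) (μ : ℂ) :
    μ ∈ spectrum ℂ M ↔ M.charpoly.IsRoot μ := by
  have hdet : (M.charpoly).eval μ = (algebraMap ℂ (Matrix n n ℂ) μ - M).det := by
    rw [Matrix.charpoly, eval_det, matPolyEquiv_charmatrix]
    simp [Matrix.algebraMap_eq_diagonal, Matrix.scalar_apply]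
    rfl
  rw [spectrum.mem_iff, IsRoot, hdet]
  simp [Matrix.isUnit_iff_isUnit_det, isUnit_iff_ne_zero]

theorem stmt0 (N : ℕ) (hN : Odd N) (c : Fin 3 → ℝ)
    (r : ℝ) (hr : r = Real.sqrt (c 0 ^ 2 + c 1 ^ 2 + c 2 ^ 2)) :
    (Mstate N c - ((((2:ℝ)^N)⁻¹ * (1 + r) : ℝ) : ℂ) • 1) *
      (Mstate N c - ((((2:ℝ)^N)⁻¹ * (1 - r) : ℝ) : ℂ) • 1) = 0 ∧
    (Mstate N c).IsHermitian ∧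
    (∀ μ ∈ spectrum ℂ (Mstate N c),
      μ = ((((2:ℝ)^N)⁻¹ * (1 + r) : ℝ) : ℂ) ∨ μ = ((((2:ℝ)^N)⁻¹ * (1 - r) : ℝ) : ℂ)) ∧
    (0 < r →
      (Mstate N c).charpoly.rootMultiplicity ((((2:ℝ)^N)⁻¹ * (1 + r) : ℝ) : ℂ) = 2^(N-1) ∧
      (Mstate N c).charpoly.rootMultiplicity ((((2:ℝ)^N)⁻¹ * (1 - r) : ℝ) : ℂ) = 2^(N-1)) := by
  have hNpos : 0 < N := hN.pos
  set t : ℂ := ((2 : ℂ) ^ N)⁻¹ with ht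
  set r' : ℂ := (r : ℂ) with hr'
  set S : Matrix (Fin N → Fin 2) (Fin N → Fin 2) ℂ :=
    ∑ j : Fin 3, (c j : ℂ) • kronPow (pauli j) N with hSdef
  set A : ℂ := ((((2:ℝ)^N)⁻¹ * (1 + r) : ℝ) : ℂ) with hAdef
  set B : ℂ := ((((2:ℝ)^N)⁻¹ * (1 - r) : ℝ) : ℂ) with hBdef
  have hM : Mstate N c = t • (1 + S) := rfl
  clear_value S
  have hrsq : r ^ 2 = c 0 ^ 2 + c 1 ^ 2 + c 2 ^ 2 := by
    rw [hr]; exact Real.sq_sqrt (by positivity)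
  have hSS : S * S = (r' ^ 2) • 1 := by
    rw [hSdef, Ssq N hN c]
    congr 1
    rw [hr']
    exact_mod_cast hrsq.symm
  have hA : A = t * (1 + r') := by rw [hAdef, ht, hr']; push_cast; ring
  have hB : B = t * (1 - r') := by rw [hBdef, ht, hr']; push_cast; ring
  have part1 : (Mstate N c - A • 1) * (Mstate N c - B • 1) = 0 := by
    rw [hA, hB, hM]
    have e1 : t • (1 + S) - (t * (1 + r')) • (1 : Matrix (Fin N → Fin 2) (Fin N → Fin 2) ℂ)
        = t • (S - r' • 1) := by module
    have e2 : t • (1 + S) - (t * (1 - r')) • (1 : Matrix (Fin N → Fin 2) (Fin N → Fin 2) ℂ)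
        = t • (S + r' • 1) := by module
    rw [e1, e2, smul_mul_smul_comm]
    have e3 : (S - r' • 1) * (S + r' • 1) = S * S - (r' ^ 2) • 1 := by
      noncomm_ring
      match_scalars <;> ring
    rw [e3, hSS, sub_self, smul_zero]
  have part2 : (Mstate N c).IsHermitian := by
    show (Mstate N c)ᴴ = Mstate N c
    simp [Mstate, Matrix.conjTranspose_smul, Matrix.conjTranspose_add,
      Matrix.conjTranspose_sum, kronPow_conjTranspose, pauli_hermitian,
      Complex.conj_ofReal, ← Complex.ofReal_pow, map_inv₀, map_pow]
  have part3 : ∀ μ ∈ spectrum ℂ (Mstate N c), μ = A ∨ μ = B := by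
    intro μ hμ
    have h0 : aeval (Mstate N c) ((Polynomial.X - C A) * (Polynomial.X - C B)) = 0 := by
      rw [_root_.map_mul, map_sub, map_sub, aeval_X, aeval_C, aeval_C,
        Algebra.algebraMap_eq_smul_one, Algebra.algebraMap_eq_smul_one]
      exact part1
    have hmem := spectrum.subset_polynomial_aeval (Mstate N c)
      ((Polynomial.X - C A) * (Polynomial.X - C B)) ⟨μ, hμ, rfl⟩
    rw [h0] at hmem
    have hz : (μ - A) * (μ - B) = 0 := by
      by_contra h
      rw [spectrum.mem_iff, sub_zero] at hmem
      exact hmem (by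
        apply IsUnit.map (algebraMap ℂ (Matrix (Fin N → Fin 2) (Fin N → Fin 2) ℂ))
        apply Ne.isUnit
        simpa using h)
    rcases mul_eq_zero.mp hz with h | h
    · exact Or.inl (sub_eq_zero.mp h)
    · exact Or.inr (sub_eq_zero.mp h)
  refine ⟨part1, part2, part3, ?_⟩
  intro hrpos
  set p : ℂ[X] := (Mstate N c).charpoly with hp
  have hpne : p ≠ 0 := (Matrix.charpoly_monic _).ne_zero
  have hdeg : p.natDegree = 2 ^ N := by
    rw [hp, Matrix.charpoly_natDegree_eq_dim]
    simp [Fintype.card_fun]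
  have hsplit : p.Splits := IsAlgClosed.splits p
  have hcard : Multiset.card p.roots = 2 ^ N := by
    rw [← hdeg, hsplit.natDegree_eq_card_roots]
  have htrace : (Mstate N c).trace = 1 := by
    rw [hM, Matrix.trace_smul, Matrix.trace_add, Matrix.trace_one, hSdef]
    rw [Matrix.trace_sum]
    simp only [Matrix.trace_smul, trace_kronPow, pauli_trace, zero_pow hNpos.ne',
      smul_zero, Finset.sum_const_zero, add_zero]
    simp [ht, Fintype.card_fun, smul_eq_mul]
  have hsum : p.roots.sum = 1 := by
    rw [← htrace, hp]; exact (Matrix.trace_eq_sum_roots_charpoly _).symm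
  have hAB : A ≠ B := by
    rw [hAdef, hBdef]
    intro h
    have := Complex.ofReal_injective h
    have h2 : ((2:ℝ)^N)⁻¹ ≠ 0 := by positivity
    have := mul_left_cancel₀ h2 this
    linarith
  have hroots : ∀ x ∈ p.roots, x = A ∨ x = B := by
    intro x hx
    exact part3 x ((aux_root_iff_spectrum _ x).mpr ((Polynomial.mem_roots hpne).mp hx))
  have hsub : p.roots.toFinset ⊆ {A, B} := by
    intro x hx
    rcases hroots x (Multiset.mem_toFinset.mp hx) with h | h <;> simp [h]
  have hzero : ∀ x ∈ ({A, B} : Finset ℂ), x ∉ p.roots.toFinset → p.roots.count x = 0 := by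
    intro x _ hx
    rw [Multiset.count_eq_zero]
    exact fun h => hx (Multiset.mem_toFinset.mpr h)
  set ka := p.roots.count A with hka
  set kb := p.roots.count B with hkb
  have hcount : ka + kb = 2 ^ N := by
    rw [← hcard, ← Multiset.toFinset_sum_count_eq p.roots,
      Finset.sum_subset hsub hzero, Finset.sum_pair hAB]
  have hsum' : p.roots.sum = ∑ x ∈ p.roots.toFinset, p.roots.count x • x := by
    simpa using Finset.sum_multiset_map_count p.roots (id : ℂ → ℂ)
  have hsum2 : (ka : ℂ) * A + (kb : ℂ) * B = 1 := by
    rw [← hsum, hsum',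
      Finset.sum_subset hsub (by intro x hx hxx; rw [hzero x hx hxx, zero_smul]),
      Finset.sum_pair hAB, nsmul_eq_mul, nsmul_eq_mul]
  have hcount' : (ka : ℂ) + kb = 2 ^ N := by exact_mod_cast hcount
  have ht2 : (2 : ℂ) ^ N ≠ 0 := pow_ne_zero _ two_ne_zero
  have e1 : (ka : ℂ) * (1 + r') + (kb : ℂ) * (1 - r') = 2 ^ N := by
    have := hsum2
    rw [hA, hB, ht] at this
    field_simp at this
    linear_combination this
  have key : ((ka : ℂ) - kb) * r' = 0 := by linear_combination e1 - hcount'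
  have hr'ne : r' ≠ 0 := by
    rw [hr']; exact_mod_cast hrpos.ne'
  have hkakb : ka = kb := by
    have := (mul_eq_zero.mp key).resolve_right hr'ne
    exact_mod_cast sub_eq_zero.mp this
  have h2n : 2 ^ N = 2 * 2 ^ (N - 1) := by
    rw [← pow_succ']
    congr 1
    omega
  have hka2 : ka = 2 ^ (N - 1) := by omega
  have hmult : ∀ x, p.rootMultiplicity x = p.roots.count x := fun x =>
    (Polynomial.count_roots p).symm
  refine ⟨?_, ?_⟩
  · rw [hmult, ← hka, hka2]
  · rw [hmult, ← hkb, ← hkakb, hka2]
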